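/- Let (L(y))_{y ∈ ℤ^d} be i.i.d. random variables with values in (1,∞) and atomless law satisfying ℙ[L(0) > t] = θ_d t^{−d} for all t ≥ n₀, where n₀^d ≥ θ_d. Define λᵢ(x) = sup{L(y) : x ∈ y + U_{i,L(y)}}, where U_{i,t} = {x ∈ [0,t]^d ∩ ℤ^d : xᵢ = 0 and xⱼ > 0 for j ≠ i}. Then there is a constant c₃ < ∞ such that ℙ[λᵢ(0) > t] ≤ c₃ t^{−1} for all t > n₀. -/

import Mathlib

open MeasureTheory ProbabilityTheory
open scoped ENNReal

lemma key_ineq {q a : ℝ} (hq0 : 0 < q) (hq1 : q ≤ 1) (ha : 1 ≤ a) :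
    (a+1) ^ (-(1+q)) ≤ (1/q) * (a ^ (-q) - (a+1) ^ (-q)) := by
  have ha0 : (0:ℝ) < a := by linarith
  have ha1 : (0:ℝ) < a + 1 := by linarith
  have hs : (-1:ℝ) ≤ -(1/(a+1)) := by
    have : 1/(a+1) ≤ 1 := by rw [div_le_one ha1]; linarith
    linarith
  have hber := rpow_one_add_le_one_add_mul_self hs hq0.le hq1
  have h1 : 1 + -(1/(a+1)) = a/(a+1) := by field_simp; ring
  rw [h1] at hber
  set A := a ^ q with hA
  set B := (a+1) ^ q with hB
  have hApos : 0 < A := Real.rpow_pos_of_pos ha0 q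
  have hBpos : 0 < B := Real.rpow_pos_of_pos ha1 q
  have hdiv : (a/(a+1)) ^ q = A / B := Real.div_rpow ha0.le ha1.le q
  rw [hdiv] at hber
  -- hber : A / B ≤ 1 + q * -(1/(a+1))
  set y := q/(a+1) with hy
  have hy0 : 0 ≤ y := by positivity
  have hy1 : y < 1 := by rw [hy, div_lt_one ha1]; linarith
  have hber' : A ≤ B * (1 - y) := by
    have := (div_le_iff₀ hBpos).mp hber
    have hled : 1 + q * -(1/(a+1)) = 1 - y := by rw [hy]; ring
    rw [hled] at this; linarith [this]
  have h3 : A + A * y ≤ B := by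
    nlinarith [mul_le_mul_of_nonneg_right hber' hy0, sq_nonneg y, hBpos.le]
  -- rewrite goal
  have hg1 : a ^ (-q) = A⁻¹ := by rw [Real.rpow_neg ha0.le]
  have hg2 : (a+1) ^ (-q) = B⁻¹ := by rw [Real.rpow_neg ha1.le]
  have hg3 : (a+1) ^ (-(1+q)) = ((a+1) * B)⁻¹ := by
    rw [Real.rpow_neg ha1.le, Real.rpow_add ha1, Real.rpow_one, mul_comm]
  rw [hg1, hg2, hg3]
  have hRHS : 1/q * (A⁻¹ - B⁻¹) = (B - A)/(q*(A*B)) := by field_simp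
  rw [hRHS, inv_eq_one_div, div_le_div_iff₀ (by positivity) (by positivity)]
  have h4 : q * A ≤ (B - A) * (a+1) := by
    have : A * y * (a+1) = q * A := by rw [hy]; field_simp
    nlinarith [h3, ha1]
  nlinarith [mul_le_mul_of_nonneg_right h4 hBpos.le]

lemma sum_bound (d : ℕ) (hd : 2 ≤ d) (t : ℝ) (ht : 1 < t) :
    ∑' k : ℕ, ENNReal.ofReal ((max t (k:ℝ)) ^ (-((d:ℝ)/((d:ℝ)-1)))) ≤
      ENNReal.ofReal (((d:ℝ) + 2) * t ^ (1 - (d:ℝ)/((d:ℝ)-1))) := by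
  have ht0 : (0:ℝ) < t := by linarith
  have hd1 : (1:ℝ) ≤ (d:ℝ) - 1 := by
    have : (2:ℝ) ≤ (d:ℝ) := by exact_mod_cast hd
    linarith
  have hdne : (d:ℝ) - 1 ≠ 0 := by linarith
  set q : ℝ := 1/((d:ℝ)-1) with hqdef
  have hq0 : 0 < q := by positivity
  have hq1 : q ≤ 1 := by rw [hqdef, div_le_one (by linarith)]; linarith
  have hp : -((d:ℝ)/((d:ℝ)-1)) = -(1+q) := by rw [hqdef]; field_simp; ring
  have h1p : 1 - (d:ℝ)/((d:ℝ)-1) = -q := by rw [hqdef]; field_simp; ring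
  rw [hp, h1p]
  rw [ENNReal.tsum_eq_iSup_nat]
  refine iSup_le fun K => ?_
  rw [← ENNReal.ofReal_sum_of_nonneg (fun k _ => Real.rpow_nonneg (le_max_of_le_left ht0.le) _)]
  apply ENNReal.ofReal_le_ofReal
  set N := ⌈t⌉₊ with hNdef
  have hN1 : 1 ≤ N := Nat.one_le_iff_ne_zero.mpr (by positivity)
  have htN : t ≤ (N:ℝ) := Nat.le_ceil t
  have hN2t : (N:ℝ) ≤ 2*t := by
    have := Nat.ceil_lt_add_one ht0.le
    rw [← hNdef] at this; linarith
  rw [← Finset.sum_filter_add_sum_filter_not (Finset.range K) (fun k => k ≤ N)]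
  have part1 : ∑ k ∈ (Finset.range K).filter (fun k => k ≤ N), (max t (k:ℝ)) ^ (-(1+q))
      ≤ 3 * t ^ (-q) := by
    calc ∑ k ∈ (Finset.range K).filter (fun k => k ≤ N), (max t (k:ℝ)) ^ (-(1+q))
        ≤ ∑ _k ∈ (Finset.range K).filter (fun k => k ≤ N), t ^ (-(1+q)) := by
          refine Finset.sum_le_sum fun k _ => ?_
          exact Real.rpow_le_rpow_of_nonpos ht0 (le_max_left _ _) (by linarith)
      _ = ((Finset.range K).filter (fun k => k ≤ N)).card * t ^ (-(1+q)) := by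
          rw [Finset.sum_const, nsmul_eq_mul]
      _ ≤ (N+1 : ℕ) * t ^ (-(1+q)) := by
          have hsub : (Finset.range K).filter (fun k => k ≤ N) ⊆ Finset.range (N+1) := by
            intro k hk
            simp only [Finset.mem_filter, Finset.mem_range] at hk ⊢
            omega
          have := Finset.card_le_card hsub
          rw [Finset.card_range] at this
          have hpos : (0:ℝ) ≤ t ^ (-(1+q)) := Real.rpow_nonneg ht0.le _
          exact mul_le_mul_of_nonneg_right (by exact_mod_cast this) hpos
      _ ≤ (3*t) * t ^ (-(1+q)) := by
          have hpos : (0:ℝ) ≤ t ^ (-(1+q)) := Real.rpow_nonneg ht0.le _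
          refine mul_le_mul_of_nonneg_right ?_ hpos
          push_cast
          linarith
      _ = 3 * t ^ (-q) := by
          rw [mul_assoc]
          congr 1
          rw [← Real.rpow_one_add' ht0.le
            (by rw [show (1:ℝ) + -(1+q) = -q by ring]; exact neg_ne_zero.mpr hq0.ne')]
          congr 1
          ring
  have part2 : ∑ k ∈ (Finset.range K).filter (fun k => ¬ k ≤ N), (max t (k:ℝ)) ^ (-(1+q))
      ≤ ((d:ℝ) - 1) * t ^ (-q) := by
    have hterm : ∀ k ∈ (Finset.range K).filter (fun k => ¬ k ≤ N),
        (max t (k:ℝ)) ^ (-(1+q)) ≤ (1/q) * ((((k:ℝ)-1)) ^ (-q) - (k:ℝ) ^ (-q)) := by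
      intro k hk
      simp only [Finset.mem_filter, Finset.mem_range, not_le] at hk
      have hk2 : 2 ≤ k := by omega
      have hkt : t ≤ (k:ℝ) := by
        calc t ≤ (N:ℝ) := htN
          _ ≤ (k:ℝ) := by exact_mod_cast Nat.le_of_lt hk.2
      rw [max_eq_right hkt]
      have ha : (1:ℝ) ≤ (k:ℝ) - 1 := by
        have : (2:ℝ) ≤ (k:ℝ) := by exact_mod_cast hk2
        linarith
      have := key_ineq hq0 hq1 ha
      simpa using this
    calc ∑ k ∈ (Finset.range K).filter (fun k => ¬ k ≤ N), (max t (k:ℝ)) ^ (-(1+q))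
        ≤ ∑ k ∈ (Finset.range K).filter (fun k => ¬ k ≤ N),
            (1/q) * ((((k:ℝ)-1)) ^ (-q) - (k:ℝ) ^ (-q)) := Finset.sum_le_sum hterm
      _ ≤ ∑ k ∈ Finset.Ico (N+1) K, (1/q) * ((((k:ℝ)-1)) ^ (-q) - (k:ℝ) ^ (-q)) := by
          refine Finset.sum_le_sum_of_subset_of_nonneg ?_ ?_
          · intro k hk
            simp only [Finset.mem_filter, Finset.mem_range, not_le] at hk
            simp only [Finset.mem_Ico]
            omega
          · intro k hk _
            simp only [Finset.mem_Ico] at hk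
            have hk1 : (1:ℝ) ≤ (k:ℝ) - 1 := by
              have : 2 ≤ k := by omega
              have : (2:ℝ) ≤ (k:ℝ) := by exact_mod_cast this
              linarith
            have hmono : (k:ℝ) ^ (-q) ≤ ((k:ℝ)-1) ^ (-q) :=
              Real.rpow_le_rpow_of_nonpos (by linarith) (by linarith) (by linarith)
            have : 0 ≤ (1/q : ℝ) := by positivity
            exact mul_nonneg this (by linarith)
      _ = (1/q) * ∑ k ∈ Finset.Ico (N+1) K, ((((k:ℝ)-1)) ^ (-q) - (k:ℝ) ^ (-q)) := by
          rw [Finset.mul_sum]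
      _ ≤ (1/q) * t ^ (-q) := by
          refine mul_le_mul_of_nonneg_left ?_ (by positivity)
          set G : ℕ → ℝ := fun m => (m:ℝ) ^ (-q) with hG
          have hcongr : ∀ k ∈ Finset.Ico (N+1) K,
              (((k:ℝ)-1)) ^ (-q) - (k:ℝ) ^ (-q) = G (k-1) - G k := by
            intro k hk
            simp only [Finset.mem_Ico] at hk
            have hk1 : 1 ≤ k := by omega
            rw [hG]
            simp only
            congr 2
            push_cast [Nat.cast_sub hk1]
            ring
          rw [Finset.sum_congr rfl hcongr, Finset.sum_Ico_eq_sum_range]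
          have hre : ∀ i ∈ Finset.range (K - (N+1)), G (N+1+i-1) - G (N+1+i)
              = G (N+i) - G (N+(i+1)) := by
            intro i _
            congr 2 <;> omega
          rw [Finset.sum_congr rfl hre, Finset.sum_range_sub' (fun i => G (N+i))]
          have hGnn : 0 ≤ G (N + (K - (N+1))) := Real.rpow_nonneg (Nat.cast_nonneg _) _
          have hGN : G N ≤ t ^ (-q) := by
            simp only [hG]
            exact Real.rpow_le_rpow_of_nonpos ht0 htN (by linarith)
          rw [Nat.add_zero]
          linarith
      _ = ((d:ℝ) - 1) * t ^ (-q) := by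
          rw [hqdef]
          congr 1
          field_simp
  calc ∑ k ∈ (Finset.range K).filter (fun k => k ≤ N), (max t (k:ℝ)) ^ (-(1+q))
        + ∑ k ∈ (Finset.range K).filter (fun k => ¬ k ≤ N), (max t (k:ℝ)) ^ (-(1+q))
      ≤ 3 * t ^ (-q) + ((d:ℝ) - 1) * t ^ (-q) := add_le_add part1 part2
    _ = ((d:ℝ) + 2) * t ^ (-q) := by ring

lemma pi_tsum_ennreal : ∀ {n : ℕ} (f : Fin n → ℤ → ℝ≥0∞),
    ∑' y : Fin n → ℤ, ∏ j, f j (y j) = ∏ j, ∑' m : ℤ, f j m := by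
  intro n
  induction n with
  | zero =>
      intro f
      simp only [Finset.univ_eq_empty, Finset.prod_empty]
      exact tsum_eq_single (fun i => i.elim0) (fun b hb => absurd (funext fun i => i.elim0) hb)
  | succ n ih =>
      intro f
      rw [← (Fin.consEquiv (fun _ : Fin (n+1) => ℤ)).tsum_eq, Fin.prod_univ_succ]
      have : ∀ p : ℤ × (Fin n → ℤ),
          ∏ j : Fin (n+1), f j (((Fin.consEquiv (fun _ : Fin (n+1) => ℤ)) p) j)
            = f 0 p.1 * ∏ j : Fin n, f j.succ (p.2 j) := by
        intro p
        rw [Fin.prod_univ_succ]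
        simp [Fin.consEquiv]
      calc ∑' p : ℤ × (Fin n → ℤ), ∏ j : Fin (n+1), f j (((Fin.consEquiv (fun _ : Fin (n+1) => ℤ)) p) j)
          = ∑' p : ℤ × (Fin n → ℤ), f 0 p.1 * ∏ j : Fin n, f j.succ (p.2 j) := by
            exact tsum_congr this
        _ = ∑' (a : ℤ) (y : Fin n → ℤ), f 0 a * ∏ j : Fin n, f j.succ (y j) :=
            ENNReal.tsum_prod'
        _ = (∑' a : ℤ, f 0 a) * ∑' y : Fin n → ℤ, ∏ j : Fin n, f j.succ (y j) := by
            simp_rw [ENNReal.tsum_mul_left, ENNReal.tsum_mul_right]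
        _ = (∑' m : ℤ, f 0 m) * ∏ j : Fin n, ∑' m : ℤ, f j.succ m := by rw [ih]

/-- Lemma 4 of Bramson–Zeitouni–Zerner: with i.i.d. umbrella lengths `L(y) > 1` having
atomless law and tail `ℙ[L(0) > t] = θ t^(-d)` for `t ≥ n₀` (where `n₀^d ≥ θ`), the
largest umbrella side through `0` in direction `i`, `λᵢ(0)`, satisfies
`ℙ[λᵢ(0) > t] ≤ c₃ / t` for all `t > n₀`. The event `λᵢ(0) > t` is expressed as the
existence of `y` with `0 ∈ y + U_{i,L(y)}` and `L(y) > t`. -/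
theorem stmt5 (d : ℕ) (hd : 2 ≤ d) (n₀ : ℕ) (hn₀ : 1 ≤ n₀) (θ : ℝ) (hθ0 : 0 < θ)
    (hθ : θ ≤ (n₀ : ℝ) ^ d)
    (Ω : Type) [MeasurableSpace Ω] (μ : Measure Ω) [IsProbabilityMeasure μ]
    (L : (Fin d → ℤ) → Ω → ℝ)
    (hmeas : ∀ y, Measurable (L y))
    (hindep : iIndepFun L μ)
    (hident : ∀ y, Measure.map (L y) μ = Measure.map (L 0) μ)
    (hgt1 : ∀ y, ∀ᵐ ω ∂μ, 1 < L y ω)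
    (hatomless : ∀ t : ℝ, μ {ω | L 0 ω = t} = 0)
    (htail : ∀ t : ℝ, (n₀ : ℝ) ≤ t →
      μ {ω | t < L 0 ω} = ENNReal.ofReal (θ * t ^ (-(d : ℝ)))) :
    ∃ c₃ : ℝ, 0 ≤ c₃ ∧ ∀ (i : Fin d) (t : ℝ), (n₀ : ℝ) < t →
      μ {ω | ∃ y : Fin d → ℤ,
          ((-y) i = 0 ∧ ∀ j ≠ i, 0 < (-y) j ∧ ((-y) j : ℝ) ≤ L y ω) ∧ t < L y ω} ≤
        ENNReal.ofReal (c₃ / t) := by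
  refine ⟨θ * ((d:ℝ)+2)^(d-1), by positivity, ?_⟩
  intro i t ht
  have hn1 : (1:ℝ) ≤ (n₀:ℝ) := by exact_mod_cast hn₀
  have ht1 : (1:ℝ) < t := lt_of_le_of_lt hn1 ht
  have ht0 : (0:ℝ) < t := by linarith
  have hd2 : (2:ℝ) ≤ (d:ℝ) := by exact_mod_cast hd
  have hdne : (d:ℝ) - 1 ≠ 0 := by linarith
  set p : ℝ := (d:ℝ)/((d:ℝ)-1) with hpdef
  have hp0 : 0 < p := by rw [hpdef]; apply div_pos <;> linarith
  have hZne : (Finset.univ.erase i).Nonempty := by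
    rw [← Finset.card_pos, Finset.card_erase_of_mem (Finset.mem_univ i), Finset.card_univ,
      Fintype.card_fin]
    omega
  have hcard : (Finset.univ.erase i).card = d - 1 := by
    rw [Finset.card_erase_of_mem (Finset.mem_univ i), Finset.card_univ, Fintype.card_fin]
  set Z : (Fin d → ℤ) → ℕ := fun y => (Finset.univ.erase i).sup fun j => (-(y j)).toNat
    with hZdef
  set s : (Fin d → ℤ) → ℝ := fun y => max t ((Z y : ℝ) - 1) with hsdef
  set Adm : (Fin d → ℤ) → Prop := fun y => (-y) i = 0 ∧ ∀ j ≠ i, 0 < (-y) j with hAdmdef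
  set D : (Fin d → ℤ) → Set Ω := fun y => {ω | Adm y ∧ s y < L y ω} with hDdef
  set h : Fin d → ℤ → ℝ≥0∞ := fun j m =>
    if j = i then (if m = 0 then 1 else 0)
    else (if m < 0 then ENNReal.ofReal ((max t (((-m : ℤ):ℝ) - 1)) ^ (-p)) else 0) with hhdef
  set S : ℝ≥0∞ := ∑' k : ℕ, ENNReal.ofReal ((max t (k:ℝ)) ^ (-p)) with hSdef
  -- Step A : union bound inclusion
  have hsub : {ω | ∃ y : Fin d → ℤ,
      ((-y) i = 0 ∧ ∀ j ≠ i, 0 < (-y) j ∧ ((-y) j : ℝ) ≤ L y ω) ∧ t < L y ω} ⊆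
      ⋃ y, D y := by
    intro ω hω
    obtain ⟨y, ⟨hy0, hyj⟩, hyt⟩ := hω
    refine Set.mem_iUnion.mpr ⟨y, ⟨⟨hy0, fun j hj => (hyj j hj).1⟩, ?_⟩⟩
    have hZle : (Z y : ℝ) ≤ L y ω := by
      obtain ⟨j₀, hj₀mem, hj₀⟩ := Finset.exists_mem_eq_sup _ hZne (fun j => (-(y j)).toNat)
      have hj₀ne : j₀ ≠ i := (Finset.mem_erase.mp hj₀mem).1
      have h1 : 0 < (-y) j₀ := (hyj j₀ hj₀ne).1
      have h2 : (((-y) j₀ : ℤ) : ℝ) ≤ L y ω := (hyj j₀ hj₀ne).2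
      have h3 : (Z y : ℤ) = (-y) j₀ := by
        rw [hZdef]
        simp only [hj₀]
        rw [Int.toNat_of_nonneg]
        · simp [Pi.neg_apply]
        · simp only [Pi.neg_apply] at h1; omega
      calc (Z y : ℝ) = (((Z y : ℤ)) : ℝ) := by push_cast; ring
        _ = (((-y) j₀ : ℤ) : ℝ) := by rw [h3]
        _ ≤ L y ω := h2
    refine max_lt hyt (by linarith)
  -- Step B : per-site measure bound
  have hDbound : ∀ y, μ (D y) ≤ ENNReal.ofReal θ * ∏ j, h j (y j) := by
    intro y
    by_cases hA : Adm y
    · have hDeq : D y = L y ⁻¹' (Set.Ioi (s y)) := by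
        ext ω
        simp only [hDdef, Set.mem_setOf_eq, Set.mem_preimage, Set.mem_Ioi]
        exact ⟨fun hw => hw.2, fun hw => ⟨hA, hw⟩⟩
      have hst : (n₀:ℝ) ≤ s y := le_trans ht.le (le_max_left _ _)
      have hs0 : 0 < s y := lt_of_lt_of_le ht0 (le_max_left _ _)
      have hμ : μ (D y) = ENNReal.ofReal (θ * (s y) ^ (-(d:ℝ))) := by
        rw [hDeq, ← Measure.map_apply (hmeas y) measurableSet_Ioi, hident y,
          Measure.map_apply (hmeas 0) measurableSet_Ioi]
        exact htail (s y) hst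
      rw [hμ]
      have hyi : y i = 0 := by
        have := hA.1
        simpa [neg_eq_zero] using this
      have hprod : ∏ j, h j (y j)
          = ∏ j ∈ Finset.univ.erase i,
              ENNReal.ofReal ((max t ((((-(y j)) : ℤ):ℝ) - 1)) ^ (-p)) := by
        rw [← Finset.mul_prod_erase Finset.univ _ (Finset.mem_univ i)]
        have h_i : h i (y i) = 1 := by simp [hhdef, hyi]
        rw [h_i, one_mul]
        refine Finset.prod_congr rfl fun j hj => ?_
        have hji : j ≠ i := (Finset.mem_erase.mp hj).1
        have hylt : y j < 0 := by
          have := hA.2 j hji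
          simp only [Pi.neg_apply] at this
          omega
        simp [hhdef, hji, hylt]
      rw [hprod,
        ← ENNReal.ofReal_prod_of_nonneg
          (fun j _ => Real.rpow_nonneg (le_trans ht0.le (le_max_left _ _)) _),
        ← ENNReal.ofReal_mul hθ0.le]
      apply ENNReal.ofReal_le_ofReal
      refine mul_le_mul_of_nonneg_left ?_ hθ0.le
      have hsd : (s y) ^ (-(d:ℝ)) = ((s y) ^ (-p)) ^ (d-1 : ℕ) := by
        rw [← Real.rpow_natCast ((s y)^(-p)) (d-1), ← Real.rpow_mul hs0.le]
        congr 1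
        have hcast : ((d-1:ℕ):ℝ) = (d:ℝ) - 1 := by
          have : 1 ≤ d := by omega
          push_cast [Nat.cast_sub this]
          ring
        rw [hcast, hpdef]
        field_simp
      rw [hsd, ← hcard, ← Finset.prod_const]
      refine Finset.prod_le_prod (fun j _ => Real.rpow_nonneg hs0.le _) (fun j hj => ?_)
      have hb0 : 0 < max t ((((-(y j)):ℤ):ℝ) - 1) := lt_of_lt_of_le ht0 (le_max_left _ _)
      refine Real.rpow_le_rpow_of_nonpos hb0 ?_ (by linarith)
      refine max_le (le_max_left _ _) ?_
      have h1 : ((-(y j)) : ℤ) ≤ ((-(y j)).toNat : ℤ) := Int.self_le_toNat _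
      have h2 : (-(y j)).toNat ≤ Z y := by
        simp only [hZdef]
        exact Finset.le_sup (f := fun j => (-(y j)).toNat) hj
      have h3 : ((((-(y j)):ℤ)):ℝ) ≤ (Z y : ℝ) := by
        calc ((((-(y j)):ℤ)):ℝ) ≤ (((-(y j)).toNat : ℤ) : ℝ) := by exact_mod_cast h1
          _ ≤ (Z y : ℝ) := by exact_mod_cast h2
      have : ((((-(y j)):ℤ)):ℝ) - 1 ≤ (Z y : ℝ) - 1 := by linarith
      exact le_trans this (le_max_right _ _)
    · have hDempty : D y = ∅ := by
        ext ω
        simp only [hDdef, Set.mem_setOf_eq, Set.mem_empty_iff_false, iff_false, not_and]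
        intro hA'
        exact absurd hA' hA
      simp [hDempty]
  -- Step D : column sums
  have hsum_i : ∑' m : ℤ, h i m = 1 := by
    simp only [hhdef, if_pos rfl]
    exact tsum_ite_eq (0:ℤ) (fun _ => (1:ℝ≥0∞))
  have hsum_j : ∀ j, j ≠ i → ∑' m : ℤ, h j m = S := by
    intro j hj
    have hinj : Function.Injective (fun k : ℕ => -(k:ℤ) - 1) := by
      intro a b hab
      simp only at hab
      omega
    have hsupp : Function.support (h j) ⊆ Set.range (fun k : ℕ => -(k:ℤ) - 1) := by
      intro m hm
      simp only [hhdef, if_neg hj, Function.mem_support] at hm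
      by_cases hm0 : m < 0
      · exact ⟨(-m - 1).toNat, by simp only; omega⟩
      · simp [hm0] at hm
    rw [← hinj.tsum_eq hsupp, hSdef]
    refine tsum_congr fun k => ?_
    have hlt : -(k:ℤ) - 1 < 0 := by omega
    simp only [hhdef, if_neg hj, if_pos hlt]
    congr 2
    push_cast
    ring
  have hprodS : ∏ j, ∑' m : ℤ, h j m = S ^ (d-1 : ℕ) := by
    rw [← Finset.mul_prod_erase Finset.univ _ (Finset.mem_univ i), hsum_i, one_mul,
      Finset.prod_congr rfl (fun j hj => hsum_j j (Finset.mem_erase.mp hj).1),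
      Finset.prod_const, hcard]
  -- Step E : conclusion
  have hS : S ≤ ENNReal.ofReal (((d:ℝ) + 2) * t ^ (1 - p)) := by
    rw [hSdef, hpdef]
    exact sum_bound d hd t ht1
  have hfinal : θ * ((((d:ℝ)+2) * t ^ (1-p)) ^ (d-1:ℕ)) = θ * ((d:ℝ)+2)^(d-1) / t := by
    rw [mul_pow]
    have hpow : (t ^ (1-p)) ^ (d-1:ℕ) = t⁻¹ := by
      rw [← Real.rpow_natCast (t^(1-p)) (d-1), ← Real.rpow_mul ht0.le]
      have hcast : ((d-1:ℕ):ℝ) = (d:ℝ) - 1 := by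
        have : 1 ≤ d := by omega
        push_cast [Nat.cast_sub this]
        ring
      have hexp : (1-p) * ((d-1:ℕ):ℝ) = -1 := by
        rw [hcast, hpdef]
        field_simp
        ring
      rw [hexp, Real.rpow_neg_one]
    rw [hpow]
    field_simp
  calc μ {ω | ∃ y : Fin d → ℤ,
        ((-y) i = 0 ∧ ∀ j ≠ i, 0 < (-y) j ∧ ((-y) j : ℝ) ≤ L y ω) ∧ t < L y ω}
      ≤ μ (⋃ y, D y) := measure_mono hsub
    _ ≤ ∑' y, μ (D y) := measure_iUnion_le _
    _ ≤ ∑' y : Fin d → ℤ, ENNReal.ofReal θ * ∏ j, h j (y j) := ENNReal.tsum_le_tsum hDbound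
    _ = ENNReal.ofReal θ * ∑' y : Fin d → ℤ, ∏ j, h j (y j) := ENNReal.tsum_mul_left
    _ = ENNReal.ofReal θ * ∏ j, ∑' m : ℤ, h j m := by rw [pi_tsum_ennreal]
    _ = ENNReal.ofReal θ * S ^ (d-1:ℕ) := by rw [hprodS]
    _ ≤ ENNReal.ofReal θ * (ENNReal.ofReal (((d:ℝ) + 2) * t ^ (1 - p))) ^ (d-1:ℕ) := by
        refine mul_le_mul_right (pow_le_pow_left' hS _) _
    _ = ENNReal.ofReal (θ * ((((d:ℝ)+2) * t ^ (1-p)) ^ (d-1:ℕ))) := by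
        rw [← ENNReal.ofReal_pow (by positivity), ← ENNReal.ofReal_mul hθ0.le]
    _ = ENNReal.ofReal (θ * ((d:ℝ)+2)^(d-1) / t) := by rw [hfinal]
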